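/- Let 0 ≤ α < 1 and let c_α be the smallest positive root of 2√x - (1+α) tan(√x) = 0. Then for every c with 0 < c ≤ c_α and every complex z with |z| < 1, one has Re(z√c · cot(z√c)) > (α+1)/2. -/

import Mathlib

open Real

lemma aux_sinh_le {y : ℝ} (hy : 0 ≤ y) : Real.sinh y ≤ y * Real.cosh y := by
  have h : ∀ u : ℝ, HasDerivAt (fun v => v * Real.cosh v - Real.sinh v)
      (u * Real.sinh u) u := by
    intro u
    have := ((hasDerivAt_id u).mul (Real.hasDerivAt_cosh u)).sub (Real.hasDerivAt_sinh u)
    exact this.congr_deriv (by simp)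
  have hmono : MonotoneOn (fun v => v * Real.cosh v - Real.sinh v) (Set.Ici 0) := by
    apply monotoneOn_of_deriv_nonneg (convex_Ici 0)
    · exact (Continuous.continuousOn (by continuity))
    · intro u hu
      exact ((h u).differentiableAt).differentiableWithinAt
    · intro u hu
      rw [interior_Ici] at hu
      rw [(h u).deriv]
      exact mul_nonneg (le_of_lt hu) (Real.sinh_nonneg_iff.2 (le_of_lt hu))
  have := hmono Set.self_mem_Ici (Set.mem_Ici.2 hy) hy
  simpa using this

lemma aux_ypart (y : ℝ) : 0 ≤ Real.sinh y * (y * Real.cosh y - Real.sinh y) := by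
  rcases le_or_gt 0 y with hy | hy
  · exact mul_nonneg (Real.sinh_nonneg_iff.2 hy) (by linarith [aux_sinh_le hy])
  · have h := aux_sinh_le (neg_nonneg.2 hy.le)
    rw [Real.sinh_neg, Real.cosh_neg] at h
    have h1 : Real.sinh y ≤ 0 := Real.sinh_nonpos_iff.2 hy.le
    nlinarith

lemma aux_k_pos {s t x : ℝ} (hs2 : s < π/2) (ht1 : t < 1)
    (hroot : s * Real.cos s = t * Real.sin s) (hx0 : 0 < x) (hxs : x < s) :
    0 < x * Real.cos x - t * Real.sin x := by
  have hs0 : 0 < s := lt_trans hx0 hxs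
  set k : ℝ → ℝ := fun v => v * Real.cos v - t * Real.sin v with hk
  have hd1 : ∀ u : ℝ, HasDerivAt k (Real.cos u - u * Real.sin u - t * Real.cos u) u := by
    intro u
    have := ((hasDerivAt_id u).mul (Real.hasDerivAt_cos u)).sub
      ((hasDerivAt_const u t).mul (Real.hasDerivAt_sin u))
    exact this.congr_deriv (by simp; ring)
  have hderiv1 : deriv k = fun u => Real.cos u - u * Real.sin u - t * Real.cos u :=
    funext fun u => (hd1 u).deriv
  have hd2 : ∀ u : ℝ, HasDerivAt (deriv k) ((t - 2) * Real.sin u - u * Real.cos u) u := by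
    intro u
    rw [hderiv1]
    have := ((Real.hasDerivAt_cos u).sub
      ((hasDerivAt_id u).mul (Real.hasDerivAt_sin u))).sub
      ((hasDerivAt_const u t).mul (Real.hasDerivAt_cos u))
    exact this.congr_deriv (by simp; ring)
  have hconc : StrictConcaveOn ℝ (Set.Icc 0 s) k := by
    apply strictConcaveOn_of_deriv2_neg (convex_Icc 0 s)
    · exact Continuous.continuousOn (by continuity)
    · intro u hu
      rw [interior_Icc] at hu
      have hu0 : 0 < u := hu.1
      have hus : u < π/2 := lt_trans hu.2 hs2
      have hsin : 0 < Real.sin u := Real.sin_pos_of_pos_of_lt_pi hu0 (by linarith [Real.pi_pos])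
      have hcos : 0 < Real.cos u := Real.cos_pos_of_mem_Ioo ⟨by linarith [Real.pi_pos], hus⟩
      have : deriv^[2] k u = (t - 2) * Real.sin u - u * Real.cos u := by
        show deriv (deriv k) u = _
        exact (hd2 u).deriv
      rw [this]
      nlinarith
  have h0mem : (0:ℝ) ∈ Set.Icc 0 s := Set.left_mem_Icc.2 hs0.le
  have hsmem : s ∈ Set.Icc 0 s := Set.right_mem_Icc.2 hs0.le
  have ha : 0 < 1 - x / s := by
    rw [sub_pos, div_lt_one hs0]; exact hxs
  have hb : 0 < x / s := div_pos hx0 hs0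
  have := hconc.2 h0mem hsmem (ne_of_lt hs0) ha hb (by ring)
  have hx : (1 - x/s) • (0:ℝ) + (x/s) • s = x := by
    field_simp
    simp [div_mul_cancel₀ x hs0.ne']
  rw [hx] at this
  have hk0 : k 0 = 0 := by simp [hk]
  have hks : k s = 0 := by simp [hk]; linarith [hroot]
  rw [hk0, hks] at this
  simp only [hk, smul_zero, add_zero, smul_eq_mul, mul_zero] at this
  linarith

lemma aux_sqrt_lt (α cα : ℝ) (hα0 : 0 ≤ α) (hα1 : α < 1) (hcα : 0 < cα)
    (hmin : ∀ x : ℝ, 0 < x →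
      2 * Real.sqrt x - (1 + α) * Real.tan (Real.sqrt x) = 0 → cα ≤ x) :
    Real.sqrt cα < π / 2 := by
  set u₀ : ℝ := Real.sqrt (1 - α) / 2 with hu₀
  set u₁ : ℝ := Real.arctan 4 with hu₁
  have h0pos : 0 < u₀ := div_pos (Real.sqrt_pos.2 (by linarith)) two_pos
  have hsq : u₀ ^ 2 = (1 - α) / 4 := by
    rw [hu₀, div_pow, Real.sq_sqrt (by linarith : (0:ℝ) ≤ 1 - α)]
    norm_num
  have hu0le : u₀ ≤ 1/2 := by
    rw [hu₀]
    have : Real.sqrt (1 - α) ≤ 1 := by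
      calc Real.sqrt (1 - α) ≤ Real.sqrt 1 := Real.sqrt_le_sqrt (by linarith)
        _ = 1 := Real.sqrt_one
    linarith
  have h01 : u₀ < u₁ := by
    have h1 : (1:ℝ)/2 < π/4 := by linarith [Real.pi_gt_three]
    have h2 : π/4 < u₁ := by
      rw [hu₁, ← Real.arctan_one]
      exact Real.arctan_strictMono (by norm_num)
    linarith
  have hu1lt : u₁ < π/2 := Real.arctan_lt_pi_div_two 4
  set F : ℝ → ℝ := fun u => 2 * u - (1 + α) * Real.tan u with hF
  have cosp : ∀ u ∈ Set.Icc u₀ u₁, 0 < Real.cos u := by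
    intro u hu
    exact Real.cos_pos_of_mem_Ioo ⟨by nlinarith [Real.pi_pos, hu.1], lt_of_le_of_lt hu.2 hu1lt⟩
  have contF : ContinuousOn F (Set.Icc u₀ u₁) := by
    apply ContinuousOn.sub (by fun_prop)
    apply ContinuousOn.mul continuousOn_const
    intro u hu
    exact (Real.continuousAt_tan.2 (ne_of_gt (cosp u hu))).continuousWithinAt
  have hF0 : 0 < F u₀ := by
    have hsin := Real.sin_lt h0pos
    have hcos := Real.one_sub_sq_div_two_lt_cos (ne_of_gt h0pos)
    have hcos0 : 0 < Real.cos u₀ := cosp u₀ (Set.left_mem_Icc.2 h01.le)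
    have key2 : (1 + α) * Real.sin u₀ < 2 * u₀ * Real.cos u₀ := by nlinarith
    show 0 < 2 * u₀ - (1 + α) * Real.tan u₀
    rw [Real.tan_eq_sin_div_cos, sub_pos, ← mul_div_assoc, div_lt_iff₀ hcos0]
    nlinarith [key2]
  have hF1 : F u₁ < 0 := by
    rw [hF]
    simp only [hu₁, Real.tan_arctan]
    nlinarith [Real.pi_lt_d2, hu1lt, Real.arctan_lt_pi_div_two 4]
  have hsub : Set.Icc (F u₁) (F u₀) ⊆ F '' Set.Icc u₀ u₁ :=
    intermediate_value_Icc' h01.le contF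
  obtain ⟨u, hu, hFu⟩ := hsub ⟨hF1.le, hF0.le⟩
  have hupos : 0 < u := lt_of_lt_of_le h0pos hu.1
  have hsqrtu : Real.sqrt (u^2) = u := Real.sqrt_sq hupos.le
  have hle : cα ≤ u^2 := by
    apply hmin (u^2) (by positivity)
    rw [hsqrtu]; exact hFu
  calc Real.sqrt cα ≤ Real.sqrt (u^2) := Real.sqrt_le_sqrt hle
    _ = u := hsqrtu
    _ ≤ u₁ := hu.2
    _ < π/2 := hu1lt

-- combined real inequality
lemma aux_key {s t x y : ℝ} (hs0 : 0 < s) (hs2 : s < π/2) (ht0 : 0 ≤ t) (ht1 : t < 1)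
    (hroot : s * Real.cos s = t * Real.sin s)
    (hxy : x^2 + y^2 < s^2) (hne : x ≠ 0 ∨ y ≠ 0) :
    t * (Real.sin x ^ 2 + Real.sinh y ^ 2)
      < x * Real.sin x * Real.cos x + y * Real.sinh y * Real.cosh y := by
  have hxs : |x| < s := by
    rw [abs_lt]; constructor <;> nlinarith [sq_nonneg y, sq_nonneg x]
  have hA : ∀ u : ℝ, u ≠ 0 → |u| < s →
      t * Real.sin u ^ 2 < u * Real.sin u * Real.cos u := by
    intro u hu0 hus
    rcases lt_or_gt_of_ne hu0 with h | h
    · have h1 : 0 < -u := by linarith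
      have h2 : -u < s := by rw [abs_lt] at hus; linarith
      have := aux_k_pos hs2 ht1 hroot h1 h2
      rw [Real.cos_neg, Real.sin_neg] at this
      have hsin : Real.sin u < 0 :=
        Real.sin_neg_of_neg_of_neg_pi_lt h (by nlinarith [Real.pi_gt_three, abs_lt.1 hus])
      nlinarith
    · have h2 : u < s := by rw [abs_lt] at hus; linarith
      have := aux_k_pos hs2 ht1 hroot h h2
      have hsin : 0 < Real.sin u :=
        Real.sin_pos_of_pos_of_lt_pi h (by nlinarith [Real.pi_gt_three])
      nlinarith
  have hB : ∀ u : ℝ, t * Real.sinh u ^ 2 ≤ u * Real.sinh u * Real.cosh u := by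
    intro u
    nlinarith [aux_ypart u, sq_nonneg (Real.sinh u)]
  rcases hne with hx | hy
  · have := hA x hx hxs
    have := hB y
    nlinarith
  · have h1 : t * Real.sin x ^ 2 ≤ x * Real.sin x * Real.cos x := by
      rcases eq_or_ne x 0 with h | h
      · simp [h]
      · exact (hA x h hxs).le
    have h2 : t * Real.sinh y ^ 2 < y * Real.sinh y * Real.cosh y := by
      have hsh : Real.sinh y ≠ 0 := by
        simpa using Real.sinh_injective.ne_iff.2 (by simpa using hy)
      nlinarith [aux_ypart y, sq_nonneg (Real.sinh y), (sq_pos_of_ne_zero hsh : 0 < Real.sinh y ^ 2)]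
    linarith

/-- Let `0 ≤ α < 1` and `c_α` the smallest positive root of `2√x - (1+α) tan √x = 0`.
Then for `0 < c ≤ c_α` and `|z| < 1`, `Re(z√c cot(z√c)) > (α+1)/2`
(at `z = 0` understood with value `1`). -/
theorem re_cot_gt (α cα : ℝ) (hα0 : 0 ≤ α) (hα1 : α < 1)
    (hcα : 0 < cα)
    (hroot : 2 * Real.sqrt cα - (1 + α) * Real.tan (Real.sqrt cα) = 0)
    (hmin : ∀ x : ℝ, 0 < x →
      2 * Real.sqrt x - (1 + α) * Real.tan (Real.sqrt x) = 0 → cα ≤ x) :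
    ∀ c : ℝ, 0 < c → c ≤ cα → ∀ z : ℂ, ‖z‖ < 1 →
      (if z = 0 then (1 : ℝ)
        else (z * (Real.sqrt c : ℂ) *
          (Complex.cos (z * (Real.sqrt c : ℂ)) /
            Complex.sin (z * (Real.sqrt c : ℂ)))).re) > (α + 1) / 2 := by
  intro c hc hccα z hz
  by_cases hz0 : z = 0
  · simp only [hz0, if_pos]
    linarith
  rw [if_neg hz0]
  set s : ℝ := Real.sqrt cα with hsdef
  set t : ℝ := (α + 1) / 2 with htdef
  have hs0 : 0 < s := Real.sqrt_pos.2 hcα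
  have hs2 : s < π / 2 := aux_sqrt_lt α cα hα0 hα1 hcα hmin
  have hcoss : 0 < Real.cos s := Real.cos_pos_of_mem_Ioo ⟨by linarith [Real.pi_pos], hs2⟩
  have ht0 : 0 ≤ t := by rw [htdef]; linarith
  have ht1 : t < 1 := by rw [htdef]; linarith
  have hroot' : s * Real.cos s = t * Real.sin s := by
    rw [Real.tan_eq_sin_div_cos] at hroot
    field_simp at hroot
    rw [htdef]
    linarith
  set w : ℂ := z * (Real.sqrt c : ℂ) with hwdef
  have hrc0 : (0:ℝ) < Real.sqrt c := Real.sqrt_pos.2 hc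
  have hw0 : w ≠ 0 := mul_ne_zero hz0 (by exact_mod_cast ne_of_gt hrc0)
  have habs : ‖w‖ < s := by
    rw [hwdef, norm_mul, Complex.norm_real, Real.norm_eq_abs, abs_of_pos hrc0]
    calc ‖z‖ * Real.sqrt c < 1 * Real.sqrt c := by
          exact mul_lt_mul_of_pos_right hz hrc0
      _ = Real.sqrt c := one_mul _
      _ ≤ s := Real.sqrt_le_sqrt hccα
  set x : ℝ := w.re with hxdef
  set y : ℝ := w.im with hydef
  have hxy : x ^ 2 + y ^ 2 < s ^ 2 := by
    have h1 : x ^ 2 + y ^ 2 = ‖w‖ ^ 2 := by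
      rw [Complex.sq_norm, Complex.normSq_apply]; ring
    rw [h1]
    exact pow_lt_pow_left₀ habs (norm_nonneg w) (by norm_num)
  have hne : x ≠ 0 ∨ y ≠ 0 := by
    by_contra h
    push_neg at h
    exact hw0 (Complex.ext h.1 h.2)
  -- components
  have hsin : Complex.sin w = (Real.sin x : ℂ) * (Real.cosh y : ℂ) +
      (Real.cos x : ℂ) * (Real.sinh y : ℂ) * Complex.I := by
    rw [Complex.sin_eq]
    simp [Complex.ofReal_sin, Complex.ofReal_cos, Complex.ofReal_sinh, Complex.ofReal_cosh]
    rfl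
  have hcos : Complex.cos w = (Real.cos x : ℂ) * (Real.cosh y : ℂ) -
      (Real.sin x : ℂ) * (Real.sinh y : ℂ) * Complex.I := by
    rw [Complex.cos_eq]
    simp [Complex.ofReal_sin, Complex.ofReal_cos, Complex.ofReal_sinh, Complex.ofReal_cosh]
    rfl
  have pyth : Real.sin x ^ 2 + Real.cos x ^ 2 = 1 := Real.sin_sq_add_cos_sq x
  have hch : Real.cosh y ^ 2 = Real.sinh y ^ 2 + 1 := Real.cosh_sq y
  have hD : Complex.normSq (Complex.sin w) = Real.sin x ^ 2 + Real.sinh y ^ 2 := by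
    rw [hsin, Complex.normSq_apply]
    simp only [Complex.add_re, Complex.add_im, Complex.mul_re, Complex.mul_im,
      Complex.ofReal_re, Complex.ofReal_im, Complex.I_re, Complex.I_im]
    ring_nf
    linear_combination Real.sin x ^ 2 * hch + Real.sinh y ^ 2 * pyth
  have hDpos : 0 < Real.sin x ^ 2 + Real.sinh y ^ 2 := by
    rw [← hD]
    apply Complex.normSq_pos.2
    intro hzero
    rw [Complex.sin_eq_zero_iff] at hzero
    obtain ⟨k, hk⟩ := hzero
    have habs2 : ‖w‖ = |(k:ℝ)| * π := by
      rw [hk, norm_mul, Complex.norm_intCast, Complex.norm_real, Real.norm_eq_abs,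
        abs_of_pos Real.pi_pos]
    rcases eq_or_ne k 0 with h | h
    · rw [h] at hk; simp at hk; exact hw0 hk
    · have : (1:ℝ) ≤ |(k:ℝ)| := by
        rw [← Int.cast_abs]
        exact_mod_cast Int.one_le_abs (by simpa using h)
      nlinarith [habs, Real.pi_pos, Real.pi_gt_three]
  have hre : (w * (Complex.cos w / Complex.sin w)).re =
      (x * Real.sin x * Real.cos x + y * Real.sinh y * Real.cosh y) /
        (Real.sin x ^ 2 + Real.sinh y ^ 2) := by
    rw [mul_div_assoc']
    rw [Complex.div_re, hD]
    have hwre : w = (x : ℂ) + (y : ℂ) * Complex.I := (Complex.re_add_im w).symm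
    rw [hcos, hsin]
    rw [hwre]
    simp only [Complex.add_re, Complex.add_im, Complex.mul_re, Complex.mul_im,
      Complex.ofReal_re, Complex.ofReal_im, Complex.I_re, Complex.I_im, Complex.sub_re,
      Complex.sub_im]
    rw [← add_div]
    congr 1
    linear_combination (x * Real.sin x * Real.cos x) * hch + (y * Real.sinh y * Real.cosh y) * pyth
  show t < _
  rw [hre, lt_div_iff₀ hDpos]
  exact aux_key hs0 hs2 ht0 ht1 hroot' hxy hne
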